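/- arXiv:2507.03512 — 10 statements merged into one kernel-verified Lean document; each statement's English description precedes it below -/
import Mathlib

section
/- Fix G ∈ [0, 1/2]. Then the set {Q(ω) : ω ∈ ℝ⁴, ω_p ≥ 0 for all p, ω₀+ω₁+ω₂+ω₃ = 1, g(ω) = G} has greatest element 8(1 + √(1 − (1 − 2G)²)). In other words, the quantum Fisher information maximized over all two-qubit probe weights with generalized geometric measure fixed at G equals Q^G = 8(1 + √(1 − (1 − 2G)²)), and this value is attained. -/
/-- Quantum Fisher information `Q(ω) = 16(ω₀+ω₃) − 16(ω₃−ω₀)²` of the two-qubit probe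
`|ψ⟩ = Σ_p √ω_p |p⟩` under the generator `h = σ_z⊗I + I⊗σ_z`. -/
noncomputable def QFI (ω : Fin 4 → ℝ) : ℝ :=
  16 * (ω 0 + ω 3) - 16 * (ω 3 - ω 0) ^ 2

/-- Generalized geometric measure of entanglement
`g(ω) = (1 − √(1 − 4(√(ω₁ω₂) − √(ω₀ω₃))²))/2`. -/
noncomputable def GGM (ω : Fin 4 → ℝ) : ℝ :=
  (1 - Real.sqrt (1 - 4 * (Real.sqrt (ω 1 * ω 2) - Real.sqrt (ω 0 * ω 3)) ^ 2)) / 2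

/-- Binary entropy `H(p) = −p log₂ p − (1−p) log₂ (1−p)` (with `0 log₂ 0 = 0`,
which holds automatically since `Real.logb 2 0 = 0`). -/
noncomputable def binEnt (p : ℝ) : ℝ :=
  -(p * Real.logb 2 p) - (1 - p) * Real.logb 2 (1 - p)

/-- Von Neumann entanglement entropy of the probe, `S(ω) = H(g(ω))`. -/
noncomputable def entEntropy (ω : Fin 4 → ℝ) : ℝ :=
  binEnt (GGM ω)

set_option maxHeartbeats 1000000 in
/-- For fixed `G ∈ [0, 1/2]`, the QFI maximized over all two-qubit probe
weights with GGM fixed at `G` equals `8(1 + √(1 − (1 − 2G)²))`, and this value is attained. -/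
theorem qfi_constrained_ggm_two_qubits (G : ℝ) (hG : G ∈ Set.Icc (0 : ℝ) (1 / 2)) :
    IsGreatest
      {q : ℝ | ∃ ω : Fin 4 → ℝ, (∀ p, 0 ≤ ω p) ∧ (∑ p, ω p) = 1 ∧ GGM ω = G ∧ q = QFI ω}
      (8 * (1 + Real.sqrt (1 - (1 - 2 * G) ^ 2))) := by
  obtain ⟨hG0, hG1⟩ := hG
  set d := Real.sqrt (1 - (1 - 2 * G) ^ 2) with hd
  have hDnn : 0 ≤ 1 - (1 - 2 * G) ^ 2 := by nlinarith
  have hd0 : 0 ≤ d := Real.sqrt_nonneg _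
  have hdsq : d ^ 2 = 1 - (1 - 2 * G) ^ 2 := Real.sq_sqrt hDnn
  have hd1 : d ≤ 1 := by nlinarith [sq_nonneg (1 - 2*G)]
  constructor
  · -- membership: witness
    refine ⟨![(1+d)/4, (1-d)/4, (1-d)/4, (1+d)/4], ?_, ?_, ?_, ?_⟩
    · intro p
      fin_cases p <;> simp <;> linarith
    · simp [Fin.sum_univ_four]
      ring
    · have h12 : Real.sqrt (((1-d)/4) * ((1-d)/4)) = (1-d)/4 := by
        rw [show ((1-d)/4) * ((1-d)/4) = ((1-d)/4)^2 by ring,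
          Real.sqrt_sq (by linarith)]
      have h03 : Real.sqrt (((1+d)/4) * ((1+d)/4)) = (1+d)/4 := by
        rw [show ((1+d)/4) * ((1+d)/4) = ((1+d)/4)^2 by ring,
          Real.sqrt_sq (by linarith)]
      simp only [GGM]
      simp only [Matrix.cons_val]
      norm_num [h12, h03]
      have : (1 : ℝ) - 4 * ((1-d)/4 - (1+d)/4) ^ 2 = (1 - 2*G)^2 := by
        nlinarith
      rw [this, Real.sqrt_sq (by linarith)]
      ring
    · simp only [QFI]
      simp only [Matrix.cons_val]
      norm_num
      ring
  · -- upper bound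
    rintro q ⟨ω, hpos, hsum, hggm, rfl⟩
    set a := ω 0; set c := ω 1; set e := ω 2; set b := ω 3
    have ha : 0 ≤ a := hpos 0
    have hb : 0 ≤ b := hpos 3
    have hc : 0 ≤ c := hpos 1
    have he : 0 ≤ e := hpos 2
    have hsum4 : a + c + e + b = 1 := by
      have := hsum
      rw [Fin.sum_univ_four] at this
      linarith
    set s := Real.sqrt (a * b) with hs
    set t := Real.sqrt (c * e) with ht
    have hs0 : 0 ≤ s := Real.sqrt_nonneg _
    have ht0 : 0 ≤ t := Real.sqrt_nonneg _
    have hssq : s ^ 2 = a * b := Real.sq_sqrt (mul_nonneg ha hb)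
    have htsq : t ^ 2 = c * e := Real.sq_sqrt (mul_nonneg hc he)
    have hsle : 2 * s ≤ a + b := by nlinarith [sq_nonneg (a - b)]
    have htle : 2 * t ≤ c + e := by nlinarith [sq_nonneg (c - e)]
    -- from GGM = G
    have hinner : 0 ≤ 1 - 4 * (t - s) ^ 2 := by nlinarith
    have hsqrt : Real.sqrt (1 - 4 * (t - s) ^ 2) = 1 - 2 * G := by
      have := hggm
      simp only [GGM] at this
      rw [← hs, ← ht] at this
      linarith
    have hts : 4 * (t - s) ^ 2 = 1 - (1 - 2 * G) ^ 2 := by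
      have := Real.sq_sqrt hinner
      rw [hsqrt] at this
      nlinarith
    have hdts : d ^ 2 = 4 * (t - s) ^ 2 := by rw [hdsq, hts]
    have habs : 2 * s ≤ 2 * t + d := by
      have h2 : |2 * (s - t)| = d := by
        rw [← Real.sqrt_sq_eq_abs, show (2 * (s - t)) ^ 2 = d ^ 2 by rw [hdts]; ring]
        exact Real.sqrt_sq hd0
      have := le_abs_self (2 * (s - t))
      linarith
    -- now polynomial inequality
    have hQ : QFI ω = 16 * (a + b) - 16 * ((a + b) ^ 2 - 4 * s ^ 2) := by
      simp only [QFI]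
      rw [hssq]
      ring
    rw [hQ]
    have hs2 : 2 * s ≤ 1 - (a + b) + d := by linarith
    rcases le_or_gt (2 * (a + b)) (1 + d) with h | h
    · have key : 64 * s ^ 2 ≤ 16 * (a + b) ^ 2 := by
        have := mul_nonneg (by linarith : (0:ℝ) ≤ (a + b) - 2 * s)
          (by linarith : (0:ℝ) ≤ (a + b) + 2 * s)
        nlinarith
      nlinarith [key]
    · have key : 64 * s ^ 2 ≤ 16 * (1 - (a + b) + d) ^ 2 := by
        have h2 : (0:ℝ) ≤ 1 - (a + b) + d + 2 * s := by linarith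
        have := mul_nonneg (by linarith : (0:ℝ) ≤ 1 - (a + b) + d - 2 * s) h2
        nlinarith
      have key2 : (0:ℝ) ≤ 8 * (1 + 2 * d) * (2 * (a + b) - 1 - d) :=
        mul_nonneg (by linarith) (by linarith)
      nlinarith [key, key2]
end

section
/- Fix G ∈ [0, 1/2] and set x := √(1 − (1 − 2G)²). Then the weights ω with ω₀ = ω₃ = (1 + x)/4 and ω₁ = ω₂ = (1 − x)/4 are nonnegative, sum to 1, satisfy g(ω) = G, and attain Q(ω) = 8(1 + x); moreover Q(ω') ≤ 8(1 + x) for every admissible weight vector ω' with g(ω') = G. (Equivalently, the state |ψ^o(G)⟩ = √((1+x)/4)(|00⟩+|11⟩) + √((1−x)/4)(|01⟩+|10⟩) is an optimal probe at fixed GGM G.) -/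

private lemma qfi_key (x s A : ℝ) (hx0 : 0 ≤ x) (hA0 : 0 ≤ A)
    (hAs2 : A ≤ s / 2) (hAup : A ≤ (1 + x - s) / 2) :
    16 * s - 16 * (s ^ 2 - 4 * A ^ 2) ≤ 8 * (1 + x) := by
  rcases le_or_gt (2 * s) (1 + x) with hcase | hcase
  · have h1 : A * A ≤ (s / 2) * (s / 2) :=
      mul_le_mul hAs2 hAs2 hA0 (le_trans hA0 hAs2)
    nlinarith [h1]
  · have h1 : A * A ≤ ((1 + x - s) / 2) * ((1 + x - s) / 2) :=
      mul_le_mul hAup hAup hA0 (le_trans hA0 hAup)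
    nlinarith [h1, mul_nonneg (by linarith : (0:ℝ) ≤ 2 * s - (1 + x))
      (by linarith : (0:ℝ) ≤ 1 + 2 * x)]

set_option maxHeartbeats 1000000 in
/-- For `G ∈ [0, 1/2]` and `x = √(1 − (1 − 2G)²)`, the weights
`ω₀ = ω₃ = (1+x)/4`, `ω₁ = ω₂ = (1−x)/4` are admissible, have GGM `G`, attain
`Q(ω) = 8(1+x)`, and no admissible weight vector with GGM `G` does better. -/
theorem optimal_probe_fixed_ggm_two_qubits (G x : ℝ) (hG : G ∈ Set.Icc (0 : ℝ) (1 / 2))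
    (hx : x = Real.sqrt (1 - (1 - 2 * G) ^ 2)) (ω : Fin 4 → ℝ)
    (hω : ω = ![(1 + x) / 4, (1 - x) / 4, (1 - x) / 4, (1 + x) / 4]) :
    (∀ p, 0 ≤ ω p) ∧ (∑ p, ω p) = 1 ∧ GGM ω = G ∧ QFI ω = 8 * (1 + x) ∧
      ∀ ω' : Fin 4 → ℝ, (∀ p, 0 ≤ ω' p) → (∑ p, ω' p) = 1 → GGM ω' = G →
        QFI ω' ≤ 8 * (1 + x) := by

  obtain ⟨hG0, hG1⟩ := hG
  have ht0 : 0 ≤ 1 - 2 * G := by linarith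
  have harg : 0 ≤ 1 - (1 - 2 * G) ^ 2 := by nlinarith
  have hx0 : 0 ≤ x := hx ▸ Real.sqrt_nonneg _
  have hx2 : x ^ 2 = 1 - (1 - 2 * G) ^ 2 := by rw [hx, Real.sq_sqrt harg]
  have hx1 : x ≤ 1 := by nlinarith
  refine ⟨?_, ?_, ?_, ?_, ?_⟩
  · intro p; fin_cases p <;> simp [hω] <;> linarith
  · rw [hω, Fin.sum_univ_four]; simp; ring
  · simp only [GGM, hω]
    simp only [Matrix.cons_val_zero, Matrix.cons_val_one, Matrix.head_cons,
      Matrix.cons_val_two, Matrix.tail_cons, Matrix.cons_val_three]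
    have h1 : Real.sqrt ((1 - x) / 4 * ((1 - x) / 4)) = (1 - x) / 4 := by
      rw [show (1 - x) / 4 * ((1 - x) / 4) = ((1 - x) / 4) ^ 2 by ring,
        Real.sqrt_sq (by linarith)]
    have h2 : Real.sqrt ((1 + x) / 4 * ((1 + x) / 4)) = (1 + x) / 4 := by
      rw [show (1 + x) / 4 * ((1 + x) / 4) = ((1 + x) / 4) ^ 2 by ring,
        Real.sqrt_sq (by linarith)]
    rw [h1, h2, show 1 - 4 * ((1 - x) / 4 - (1 + x) / 4) ^ 2 = (1 - 2 * G) ^ 2 by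
      linear_combination -hx2, Real.sqrt_sq ht0]
    ring
  · simp only [QFI, hω, Matrix.cons_val_zero, Matrix.cons_val_three,
      Matrix.cons_val_two, Matrix.tail_cons, Matrix.head_cons]
    ring
  · intro ω' hpos hsum hg
    have ha := hpos 0
    have hb := hpos 1
    have hc := hpos 2
    have hd := hpos 3
    rw [Fin.sum_univ_four] at hsum
    set a := ω' 0 with ha'
    set b := ω' 1 with hb'
    set c := ω' 2 with hc'
    set d := ω' 3 with hd'
    set A := Real.sqrt (a * d) with hA'
    set B := Real.sqrt (b * c) with hB'
    have hA0 : 0 ≤ A := Real.sqrt_nonneg _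
    have hB0 : 0 ≤ B := Real.sqrt_nonneg _
    have hA2 : A ^ 2 = a * d := Real.sq_sqrt (mul_nonneg ha hd)
    have hB2 : B ^ 2 = b * c := Real.sq_sqrt (mul_nonneg hb hc)
    have hAs : A ≤ (a + d) / 2 := by nlinarith [sq_nonneg (a - d), sq_nonneg (A - (a+d)/2)]
    have hBs : B ≤ (b + c) / 2 := by nlinarith [sq_nonneg (b - c), sq_nonneg (B - (b+c)/2)]
    have hgg : Real.sqrt (1 - 4 * (B - A) ^ 2) = 1 - 2 * G := by
      simp only [GGM, ← hA', ← hB'] at hg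
      linarith
    have hargAB : 0 ≤ 1 - 4 * (B - A) ^ 2 := by nlinarith
    have hsq : 1 - 4 * (B - A) ^ 2 = (1 - 2 * G) ^ 2 := by
      rw [← hgg, Real.sq_sqrt hargAB]
    have heq : (A - B) ^ 2 = (x / 2) ^ 2 := by linear_combination -hsq/4 - hx2/4
    have hAB : A - B ≤ x / 2 := by
      have h1 : A - B ≤ |A - B| := le_abs_self _
      have h2 : |A - B| = x / 2 := by
        rw [← Real.sqrt_sq_eq_abs, heq, Real.sqrt_sq (by linarith)]
      linarith
    have hgoal : QFI ω' = 16 * (a + d) - 16 * (d - a) ^ 2 := rfl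
    rw [hgoal]
    have hkey : (d - a) ^ 2 = (a + d) ^ 2 - 4 * A ^ 2 := by rw [hA2]; ring
    rw [hkey]
    set s := a + d with hs'
    have hs0 : 0 ≤ s := by linarith
    have hs1 : s ≤ 1 := by linarith
    have hAup : A ≤ (1 + x - s) / 2 := by linarith
    exact qfi_key x s A hx0 hA0 (by linarith) hAup
end

section
/- Fix S ∈ [0, 1] and let Q_S := sup {Q(ω) : ω ∈ ℝ⁴, ω_p ≥ 0, ω₀+ω₁+ω₂+ω₃ = 1, S(ω) = S} be the quantum Fisher information maximized over all two-qubit probe weights with entanglement entropy fixed at S. Then 8 ≤ Q_S ≤ 16, the supremum is attained, and S = H(λ) where λ := (1 − √(1 − (1 − Q_S/8)²))/2. -/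
lemma binEnt_eq (p : ℝ) : binEnt p = Real.binEntropy p / Real.log 2 := by
  unfold binEnt Real.binEntropy Real.logb
  rw [Real.log_inv, Real.log_inv]; ring

lemma binEnt_continuous : Continuous binEnt := by
  simp only [funext binEnt_eq]
  exact Real.binEntropy_continuous.div_const _

lemma binEnt_zero : binEnt 0 = 0 := by simp [binEnt_eq]

lemma binEnt_half : binEnt (1/2) = 1 := by
  rw [binEnt_eq, show (1/2 : ℝ) = 2⁻¹ by norm_num, Real.binEntropy_two_inv,
    div_self (Real.log_ne_zero_of_pos_of_ne_one (by norm_num) (by norm_num))]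

lemma binEnt_strictMonoOn : StrictMonoOn binEnt (Set.Icc 0 2⁻¹) := by
  intro x hx y hy hxy
  simp only [binEnt_eq]
  exact (div_lt_div_iff_of_pos_right (Real.log_pos (by norm_num))).2
    (Real.binEntropy_strictMonoOn hx hy hxy)

lemma two_sqrt_mul_le {x y : ℝ} (hx : 0 ≤ x) (hy : 0 ≤ y) : 2 * Real.sqrt (x*y) ≤ x + y := by
  have h : Real.sqrt (x*y) ≤ Real.sqrt (((x+y)/2)^2) :=
    Real.sqrt_le_sqrt (by nlinarith [sq_nonneg (x - y)])
  rw [Real.sqrt_sq (by positivity)] at h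
  linarith

lemma key (A a b : ℝ) (ha : 0 ≤ a) (hb : 0 ≤ b) (h2a : 2*a ≤ A) (h2b : 2*b ≤ 1 - A)
    (hA1 : A ≤ 1) : A - (A^2 - 4*a^2) ≤ 1/2 + |b - a| := by
  rcases le_total a b with h | h
  · rw [abs_of_nonneg (by linarith)]
    nlinarith [mul_le_mul h2a (show 2*a ≤ 1 - A by linarith) (by linarith)
      (by linarith : (0:ℝ) ≤ A), sq_nonneg (2*A - 1)]
  · rw [abs_of_nonpos (by linarith)]
    rcases le_total a (1/4 : ℝ) with h4 | h4
    · nlinarith [sq_nonneg (A - 2*a + (4*a - 1)/2), mul_nonneg (sub_nonneg.2 h2a) (sub_nonneg.2 h)]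
    · nlinarith [mul_nonneg (sub_nonneg.2 h2a) (show 0 ≤ 1 - A - 2*b by linarith),
        mul_nonneg (sub_nonneg.2 h2a) ha]

/-- The main upper bound on the QFI. -/
lemma QFI_le (ω : Fin 4 → ℝ) (hpos : ∀ p, 0 ≤ ω p) (hsum : (∑ p, ω p) = 1) :
    QFI ω ≤ 8 + 16 * |Real.sqrt (ω 1 * ω 2) - Real.sqrt (ω 0 * ω 3)| := by
  have hsum' : ω 0 + ω 1 + ω 2 + ω 3 = 1 := by
    simpa [Fin.sum_univ_four] using hsum
  set a := Real.sqrt (ω 0 * ω 3) with ha_def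
  set b := Real.sqrt (ω 1 * ω 2) with hb_def
  have ha : 0 ≤ a := Real.sqrt_nonneg _
  have hb : 0 ≤ b := Real.sqrt_nonneg _
  have ha2 : a^2 = ω 0 * ω 3 := Real.sq_sqrt (mul_nonneg (hpos 0) (hpos 3))
  have h2a : 2*a ≤ ω 0 + ω 3 := two_sqrt_mul_le (hpos 0) (hpos 3)
  have h2b : 2*b ≤ ω 1 + ω 2 := two_sqrt_mul_le (hpos 1) (hpos 2)
  have hk := key (ω 0 + ω 3) a b ha hb h2a (by linarith) (by nlinarith [hpos 1, hpos 2])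
  have hd : (ω 3 - ω 0)^2 = (ω 0 + ω 3)^2 - 4*a^2 := by rw [ha2]; ring
  rw [QFI, hd]
  linarith

/-- Relation between GGM and the sqrt difference. -/
lemma GGM_facts (ω : Fin 4 → ℝ) (hpos : ∀ p, 0 ≤ ω p) (hsum : (∑ p, ω p) = 1) :
    GGM ω ∈ Set.Icc (0:ℝ) 2⁻¹ ∧
    (Real.sqrt (ω 1 * ω 2) - Real.sqrt (ω 0 * ω 3))^2 = GGM ω * (1 - GGM ω) := by
  have hsum' : ω 0 + ω 1 + ω 2 + ω 3 = 1 := by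
    simpa [Fin.sum_univ_four] using hsum
  set a := Real.sqrt (ω 0 * ω 3) with ha_def
  set b := Real.sqrt (ω 1 * ω 2) with hb_def
  have ha : 0 ≤ a := Real.sqrt_nonneg _
  have hb : 0 ≤ b := Real.sqrt_nonneg _
  have h2a : 2*a ≤ ω 0 + ω 3 := two_sqrt_mul_le (hpos 0) (hpos 3)
  have h2b : 2*b ≤ ω 1 + ω 2 := two_sqrt_mul_le (hpos 1) (hpos 2)
  have ha12 : a ≤ 1/2 := by nlinarith [hpos 1, hpos 2]
  have hb12 : b ≤ 1/2 := by nlinarith [hpos 0, hpos 3]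
  have hdle : 1 - 4*(b - a)^2 ∈ Set.Icc (0:ℝ) 1 := by
    constructor <;> nlinarith
  have hs0 : Real.sqrt (1 - 4*(b-a)^2) ≤ 1 := Real.sqrt_le_one.2 hdle.2
  have hs1 : 0 ≤ Real.sqrt (1 - 4*(b-a)^2) := Real.sqrt_nonneg _
  have hsq : (Real.sqrt (1 - 4*(b-a)^2))^2 = 1 - 4*(b-a)^2 := Real.sq_sqrt hdle.1
  have hG : GGM ω = (1 - Real.sqrt (1 - 4*(b-a)^2))/2 := rfl
  refine ⟨⟨by rw [hG]; linarith, by rw [hG]; norm_num; linarith⟩, ?_⟩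
  rw [hG]; nlinarith [hsq]


/-- For fixed `S ∈ [0, 1]`, the supremum `Q_S` of the QFI over all two-qubit
probe weights with entanglement entropy fixed at `S` satisfies `8 ≤ Q_S ≤ 16`, is attained,
and `S = H(λ)` with `λ = (1 − √(1 − (1 − Q_S/8)²))/2`. -/
theorem qfi_constrained_entropy_two_qubits (S : ℝ) (hS : S ∈ Set.Icc (0 : ℝ) 1) (QS : ℝ)
    (hQS : QS = sSup
      {q : ℝ | ∃ ω : Fin 4 → ℝ,
        (∀ p, 0 ≤ ω p) ∧ (∑ p, ω p) = 1 ∧ entEntropy ω = S ∧ q = QFI ω}) :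
    8 ≤ QS ∧ QS ≤ 16 ∧
      QS ∈ {q : ℝ | ∃ ω : Fin 4 → ℝ,
        (∀ p, 0 ≤ ω p) ∧ (∑ p, ω p) = 1 ∧ entEntropy ω = S ∧ q = QFI ω} ∧
      S = binEnt ((1 - Real.sqrt (1 - (1 - QS / 8) ^ 2)) / 2) := by
  -- get μ with binEnt μ = S via IVT
  obtain ⟨μ, hμmem, hμS⟩ : ∃ μ ∈ Set.Icc (0:ℝ) (1/2), binEnt μ = S := by
    have := intermediate_value_Icc (by norm_num : (0:ℝ) ≤ 1/2)
      (binEnt_continuous.continuousOn (s := Set.Icc 0 (1/2)))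
    rw [binEnt_zero, binEnt_half] at this
    obtain ⟨μ, h1, h2⟩ := this hS
    exact ⟨μ, h1, h2⟩
  obtain ⟨hμ0, hμ12⟩ := hμmem
  set c := Real.sqrt (μ * (1 - μ)) with hc_def
  have hc0 : 0 ≤ c := Real.sqrt_nonneg _
  have hc2 : c^2 = μ * (1 - μ) := Real.sq_sqrt (by nlinarith)
  have hc12 : c ≤ 1/2 := by nlinarith
  -- the witness
  set ω : Fin 4 → ℝ := ![1/4 + c/2, 1/4 - c/2, 1/4 - c/2, 1/4 + c/2] with hω_def
  have hωpos : ∀ p, 0 ≤ ω p := by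
    intro p; fin_cases p <;> simp [hω_def] <;> linarith
  have hωsum : (∑ p, ω p) = 1 := by
    simp [Fin.sum_univ_four, hω_def]; ring
  have hω1 : ω 1 * ω 2 = (1/4 - c/2)^2 := by simp [hω_def]; ring
  have hω0 : ω 0 * ω 3 = (1/4 + c/2)^2 := by simp [hω_def]; ring
  have hsqdiff : Real.sqrt (ω 1 * ω 2) - Real.sqrt (ω 0 * ω 3) = -c := by
    rw [hω1, hω0, Real.sqrt_sq (by linarith), Real.sqrt_sq (by linarith)]; ring
  have hGGMω : GGM ω = μ := by
    rw [GGM, hsqdiff]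
    have h1 : 1 - 4 * (-c)^2 = (1 - 2*μ)^2 := by rw [neg_pow]; nlinarith
    rw [h1, Real.sqrt_sq (by linarith)]
    ring
  have hentω : entEntropy ω = S := by rw [entEntropy, hGGMω, hμS]
  have hQFIω : QFI ω = 8 + 16*c := by
    simp [QFI, hω_def]; ring
  set T := {q : ℝ | ∃ ω : Fin 4 → ℝ,
      (∀ p, 0 ≤ ω p) ∧ (∑ p, ω p) = 1 ∧ entEntropy ω = S ∧ q = QFI ω} with hT_def
  have hmem : (8 + 16*c) ∈ T := ⟨ω, hωpos, hωsum, hentω, hQFIω.symm⟩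
  -- upper bound
  have hub : ∀ q ∈ T, q ≤ 8 + 16*c := by
    rintro q ⟨ω', hpos', hsum', hent', rfl⟩
    obtain ⟨hGmem, hGrel⟩ := GGM_facts ω' hpos' hsum'
    have hGμ : GGM ω' = μ := by
      have : binEnt (GGM ω') = binEnt μ := by rw [hμS]; exact hent'
      exact binEnt_strictMonoOn.injOn hGmem ⟨hμ0, by norm_num; linarith⟩ this
    have habs : |Real.sqrt (ω' 1 * ω' 2) - Real.sqrt (ω' 0 * ω' 3)| = c := by
      rw [← Real.sqrt_sq_eq_abs, hGrel, hGμ, hc_def]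
    have := QFI_le ω' hpos' hsum'
    rw [habs] at this
    linarith
  have hQSeq : QS = 8 + 16*c := by
    rw [hQS]
    exact le_antisymm (csSup_le ⟨_, hmem⟩ hub) (le_csSup ⟨_, hub⟩ hmem)
  refine ⟨by linarith, by linarith, by rw [hQSeq]; exact hmem, ?_⟩
  have h8 : 1 - QS/8 = -(2*c) := by rw [hQSeq]; ring
  rw [h8]
  have h1 : 1 - (-(2*c))^2 = (1 - 2*μ)^2 := by nlinarith
  rw [h1, Real.sqrt_sq (by linarith)]
  rw [show (1 - (1 - 2*μ))/2 = μ by ring]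
  exact hμS.symm
end

section
/- Let ω = (ω₀, ω₁, ω₂, ω₃) be nonnegative reals summing to 1, and let ρ_A be the 2×2 real symmetric matrix with diagonal entries ω₀+ω₁ and ω₂+ω₃ and off-diagonal entries √(ω₀ω₂) + √(ω₁ω₃) (the reduced density matrix of the two-qubit state |ψ⟩ = Σ_p √ω_p |p⟩). Then the von Neumann entropy of ρ_A, i.e. −λ₁ log₂ λ₁ − λ₂ log₂ λ₂ where λ₁, λ₂ are the eigenvalues of ρ_A, equals H(p_s) with p_s = (1 − √(1 − 4(√(ω₁ω₂) − √(ω₀ω₃))²))/2. -/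
lemma trace_eq_sum_eig (A : Matrix (Fin 2) (Fin 2) ℝ) (hA : A.IsHermitian) :
    A.trace = ∑ i, hA.eigenvalues i := by
  nth_rewrite 1 [hA.spectral_theorem]
  rw [Unitary.conjStarAlgAut_apply]
  rw [Matrix.trace_mul_comm, ← Matrix.mul_assoc,
    Matrix.mem_unitaryGroup_iff'.mp (hA.eigenvectorUnitary).2, Matrix.one_mul]
  simp [Matrix.trace_diagonal]

lemma eig_pair (x y t : ℝ) (h1 : x + y = 1) (ht2 : t ^ 2 ≤ 1 / 4) (h2 : x * y = t ^ 2) :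
    -(x * Real.logb 2 x + y * Real.logb 2 y) =
      binEnt ((1 - Real.sqrt (1 - 4 * t ^ 2)) / 2) := by
  have hD0 : (0 : ℝ) ≤ 1 - 4 * t ^ 2 := by nlinarith
  have hsD : Real.sqrt (1 - 4 * t ^ 2) ^ 2 = 1 - 4 * t ^ 2 := Real.sq_sqrt hD0
  have hpq : ((1 - Real.sqrt (1 - 4 * t ^ 2)) / 2) *
      (1 - (1 - Real.sqrt (1 - 4 * t ^ 2)) / 2) = t ^ 2 := by nlinarith [hsD]
  set p := (1 - Real.sqrt (1 - 4 * t ^ 2)) / 2 with hp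
  have hfac : (x - p) * (x - (1 - p)) = 0 := by linear_combination hpq + x * h1 - h2
  rcases mul_eq_zero.mp hfac with h | h
  · have e0 : x = p := by linarith
    have e1 : y = 1 - p := by linarith
    rw [e0, e1]; unfold binEnt; ring
  · have e0 : x = 1 - p := by linarith
    have e1 : y = p := by linarith
    rw [e0, e1]; unfold binEnt; ring

/-- The von Neumann entropy `−λ₁ log₂ λ₁ − λ₂ log₂ λ₂` of the reduced density
matrix `ρ_A` of the two-qubit probe equals `H(p_s)` with
`p_s = (1 − √(1 − 4(√(ω₁ω₂) − √(ω₀ω₃))²))/2`. -/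
theorem reduced_state_entropy_two_qubits (ω : Fin 4 → ℝ) (hpos : ∀ p, 0 ≤ ω p)
    (hsum : (∑ p, ω p) = 1) (ρA : Matrix (Fin 2) (Fin 2) ℝ)
    (hρ : ρA = !![ω 0 + ω 1, Real.sqrt (ω 0 * ω 2) + Real.sqrt (ω 1 * ω 3);
                  Real.sqrt (ω 0 * ω 2) + Real.sqrt (ω 1 * ω 3), ω 2 + ω 3])
    (hA : ρA.IsHermitian) :
    (-∑ i, hA.eigenvalues i * Real.logb 2 (hA.eigenvalues i)) =
      binEnt ((1 - Real.sqrt (1 - 4 * (Real.sqrt (ω 1 * ω 2) - Real.sqrt (ω 0 * ω 3)) ^ 2)) / 2) := by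
  have h0 := hpos 0; have h1 := hpos 1; have h2 := hpos 2; have h3 := hpos 3
  have sq0 : Real.sqrt (ω 0) ^ 2 = ω 0 := Real.sq_sqrt h0
  have sq1 : Real.sqrt (ω 1) ^ 2 = ω 1 := Real.sq_sqrt h1
  have sq2 : Real.sqrt (ω 2) ^ 2 = ω 2 := Real.sq_sqrt h2
  have sq3 : Real.sqrt (ω 3) ^ 2 = ω 3 := Real.sq_sqrt h3
  have n0 : 0 ≤ Real.sqrt (ω 0) := Real.sqrt_nonneg _
  have n1 : 0 ≤ Real.sqrt (ω 1) := Real.sqrt_nonneg _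
  have n2 : 0 ≤ Real.sqrt (ω 2) := Real.sqrt_nonneg _
  have n3 : 0 ≤ Real.sqrt (ω 3) := Real.sqrt_nonneg _
  have hs02 : Real.sqrt (ω 0 * ω 2) = Real.sqrt (ω 0) * Real.sqrt (ω 2) := Real.sqrt_mul h0 _
  have hs13 : Real.sqrt (ω 1 * ω 3) = Real.sqrt (ω 1) * Real.sqrt (ω 3) := Real.sqrt_mul h1 _
  have hs12 : Real.sqrt (ω 1 * ω 2) = Real.sqrt (ω 1) * Real.sqrt (ω 2) := Real.sqrt_mul h1 _
  have hs03 : Real.sqrt (ω 0 * ω 3) = Real.sqrt (ω 0) * Real.sqrt (ω 3) := Real.sqrt_mul h0 _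
  have hsum4 : Real.sqrt (ω 0) ^ 2 + Real.sqrt (ω 1) ^ 2 + Real.sqrt (ω 2) ^ 2
      + Real.sqrt (ω 3) ^ 2 = 1 := by
    rw [sq0, sq1, sq2, sq3]; rw [Fin.sum_univ_four] at hsum; linarith
  have ht2 : (Real.sqrt (ω 1 * ω 2) - Real.sqrt (ω 0 * ω 3)) ^ 2 ≤ 1 / 4 := by
    rw [hs12, hs03]
    have hub : Real.sqrt (ω 1) * Real.sqrt (ω 2) - Real.sqrt (ω 0) * Real.sqrt (ω 3) ≤ 1 / 2 := by
      nlinarith [sq_nonneg (Real.sqrt (ω 1) - Real.sqrt (ω 2)), mul_nonneg n0 n3]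
    have hlb : -(1 / 2 : ℝ) ≤ Real.sqrt (ω 1) * Real.sqrt (ω 2)
        - Real.sqrt (ω 0) * Real.sqrt (ω 3) := by
      nlinarith [sq_nonneg (Real.sqrt (ω 0) - Real.sqrt (ω 3)), mul_nonneg n1 n2]
    nlinarith
  have htr : hA.eigenvalues 0 + hA.eigenvalues 1 = 1 := by
    have h := trace_eq_sum_eig ρA hA
    rw [Fin.sum_univ_two] at h
    rw [← h, hρ, Matrix.trace_fin_two_of]
    rw [Fin.sum_univ_four] at hsum; linarith
  have hdet : hA.eigenvalues 0 * hA.eigenvalues 1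
      = (Real.sqrt (ω 1 * ω 2) - Real.sqrt (ω 0 * ω 3)) ^ 2 := by
    have h := hA.det_eq_prod_eigenvalues
    rw [Fin.prod_univ_two] at h
    have h' : ρA.det = hA.eigenvalues 0 * hA.eigenvalues 1 := by exact_mod_cast h
    have hdet' : ρA.det = (Real.sqrt (ω 1 * ω 2) - Real.sqrt (ω 0 * ω 3)) ^ 2 := by
      rw [hρ, Matrix.det_fin_two_of, hs02, hs13, hs12, hs03]
      linear_combination (-(ω 2 + ω 3)) * sq0 + (-(ω 2 + ω 3)) * sq1 +
        (-(Real.sqrt (ω 0) ^ 2 + Real.sqrt (ω 1) ^ 2)) * sq2 +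
        (-(Real.sqrt (ω 0) ^ 2 + Real.sqrt (ω 1) ^ 2)) * sq3
    rw [h'] at hdet'
    exact hdet'
  rw [Fin.sum_univ_two]
  exact eig_pair _ _ _ htr ht2 hdet
end

section
/- Let G_f := (1 − √(3)/2)/2. The weight vectors ω^{(1)} = (1/8, 3/8, 3/8, 1/8) and ω^{(2)} = (3/8, 1/8, 1/8, 3/8) both lie in the probability simplex and both satisfy g(ω^{(1)}) = g(ω^{(2)}) = G_f, yet Q(ω^{(1)}) = 4 while Q(ω^{(2)}) = 12. Moreover ω^{(1)} satisfies (√ω₀ + √ω₃)² = 1/2 while ω^{(2)} satisfies (√ω₀ + √ω₃)² = 3/2, and Q(ω^{(2)}) > Q(ω^{(1)}). -/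
lemma sq1' : Real.sqrt (1/64 : ℝ) = 1/8 := by
  rw [show (1/64:ℝ) = (1/8)^2 by norm_num, Real.sqrt_sq (by norm_num)]

lemma sq9' : Real.sqrt (9/64 : ℝ) = 3/8 := by
  rw [show (9/64:ℝ) = (3/8)^2 by norm_num, Real.sqrt_sq (by norm_num)]

lemma sq18' : Real.sqrt (1/8 : ℝ) + Real.sqrt (1/8 : ℝ) = Real.sqrt (1/2) := by
  rw [show (1/2:ℝ) = 4 * (1/8) by norm_num, show (4:ℝ) = 2^2 by norm_num,
    Real.sqrt_mul (by positivity), Real.sqrt_sq (by norm_num)]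
  ring

lemma sq38' : Real.sqrt (3/8 : ℝ) + Real.sqrt (3/8 : ℝ) = Real.sqrt (3/2) := by
  rw [show (3/2:ℝ) = 4 * (3/8) by norm_num, show (4:ℝ) = 2^2 by norm_num,
    Real.sqrt_mul (by positivity), Real.sqrt_sq (by norm_num)]
  ring

lemma sq34' : Real.sqrt (3/4 : ℝ) = Real.sqrt 3 / 2 := by
  rw [show (3/4:ℝ) = 3 / 2^2 by norm_num, Real.sqrt_div' 3 (by norm_num), Real.sqrt_sq (by norm_num : (0:ℝ) ≤ 2)]

/-- At the special value `G_f = (1 − √3/2)/2`, the two weight vectors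
`ω⁽¹⁾ = (1/8, 3/8, 3/8, 1/8)` and `ω⁽²⁾ = (3/8, 1/8, 1/8, 3/8)` both lie in the simplex and
have GGM `G_f`, yet `Q(ω⁽¹⁾) = 4` while `Q(ω⁽²⁾) = 12`; they satisfy
`(√ω₀ + √ω₃)² = 1/2` and `3/2` respectively, and `Q(ω⁽²⁾) > Q(ω⁽¹⁾)`. -/
theorem special_ggm_two_branches (Gf : ℝ) (hGf : Gf = (1 - Real.sqrt 3 / 2) / 2)
    (ω₁ ω₂ : Fin 4 → ℝ) (hω₁ : ω₁ = ![1 / 8, 3 / 8, 3 / 8, 1 / 8])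
    (hω₂ : ω₂ = ![3 / 8, 1 / 8, 1 / 8, 3 / 8]) :
    ((∀ p, 0 ≤ ω₁ p) ∧ (∑ p, ω₁ p) = 1) ∧
    ((∀ p, 0 ≤ ω₂ p) ∧ (∑ p, ω₂ p) = 1) ∧
    GGM ω₁ = Gf ∧ GGM ω₂ = Gf ∧
    QFI ω₁ = 4 ∧ QFI ω₂ = 12 ∧
    (Real.sqrt (ω₁ 0) + Real.sqrt (ω₁ 3)) ^ 2 = 1 / 2 ∧
    (Real.sqrt (ω₂ 0) + Real.sqrt (ω₂ 3)) ^ 2 = 3 / 2 ∧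
    QFI ω₁ < QFI ω₂ := by
  subst hGf hω₁ hω₂
  refine ⟨⟨?_, ?_⟩, ⟨?_, ?_⟩, ?_, ?_, ?_, ?_, ?_, ?_, ?_⟩
  · intro p; fin_cases p <;> norm_num
  · simp [Fin.sum_univ_four]; norm_num
  · intro p; fin_cases p <;> norm_num
  · simp [Fin.sum_univ_four]; norm_num
  · simp only [GGM, Matrix.cons_val_zero, Matrix.cons_val_one, Matrix.head_cons,
      Matrix.cons_val_two, Matrix.cons_val_three, Matrix.tail_cons]
    rw [show (3/8 * (3/8) : ℝ) = 9/64 by norm_num,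
      show (1/8 * (1/8) : ℝ) = 1/64 by norm_num, sq9', sq1',
      show (1 - 4*(3/8 - 1/8)^2 : ℝ) = 3/4 by norm_num, sq34']
  · simp only [GGM, Matrix.cons_val_zero, Matrix.cons_val_one, Matrix.head_cons,
      Matrix.cons_val_two, Matrix.cons_val_three, Matrix.tail_cons]
    rw [show (1/8 * (1/8) : ℝ) = 1/64 by norm_num,
      show (3/8 * (3/8) : ℝ) = 9/64 by norm_num, sq1', sq9',
      show (1 - 4*(1/8 - 3/8)^2 : ℝ) = 3/4 by norm_num, sq34']
  · simp [QFI]; norm_num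
  · simp [QFI]; norm_num
  · simp only [Matrix.cons_val_zero, Matrix.cons_val_three, Matrix.tail_cons,
      Matrix.cons_val_two, Matrix.head_cons]
    rw [sq18', Real.sq_sqrt (by norm_num : (0:ℝ) ≤ 1/2)]
  · simp only [Matrix.cons_val_zero, Matrix.cons_val_three, Matrix.tail_cons,
      Matrix.cons_val_two, Matrix.head_cons]
    rw [sq38', Real.sq_sqrt (by norm_num : (0:ℝ) ≤ 3/2)]
  · simp [QFI]; norm_num
end

section
/- Fix G ∈ (0, 1/2) and set x := √(1 − (1 − 2G)²). If ω lies in the probability simplex with ω₃ = 0 (or symmetrically ω₀ = 0), ω₁ = ω₂, and g(ω) = G, then Q(ω) = 16(x − x²) = 16(√(1 − (1 − 2G)²) − (1 − (1 − 2G)²)), and this value is strictly less than the interior optimum 8(1 + x). Hence no such boundary state attains the entanglement-constrained maximum of the quantum Fisher information. -/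
/-- For `G ∈ (0, 1/2)` and `x = √(1 − (1 − 2G)²)`, any simplex point with
`ω₃ = 0` (or symmetrically `ω₀ = 0`), `ω₁ = ω₂`, and GGM `G` has
`Q(ω) = 16(x − x²)`, strictly less than the interior optimum `8(1 + x)`. -/
theorem boundary_w3_zero_suboptimal (G x : ℝ) (hG : G ∈ Set.Ioo (0 : ℝ) (1 / 2))
    (hx : x = Real.sqrt (1 - (1 - 2 * G) ^ 2)) (ω : Fin 4 → ℝ) (hpos : ∀ p, 0 ≤ ω p)
    (hsum : (∑ p, ω p) = 1) (hzero : ω 3 = 0 ∨ ω 0 = 0) (h12 : ω 1 = ω 2)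
    (hg : GGM ω = G) :
    QFI ω = 16 * (x - x ^ 2) ∧
    QFI ω = 16 * (Real.sqrt (1 - (1 - 2 * G) ^ 2) - (1 - (1 - 2 * G) ^ 2)) ∧
    QFI ω < 8 * (1 + x) := by
  obtain ⟨hG0, hG1⟩ := hG
  rw [Fin.sum_univ_four] at hsum
  have h2G : 0 < 1 - 2 * G := by linarith
  have hprod : Real.sqrt (ω 0 * ω 3) = 0 := by
    rcases hzero with h | h <;> simp [h]
  have hgg : GGM ω = (1 - Real.sqrt (1 - 4 * (ω 1) ^ 2)) / 2 := by
    unfold GGM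
    rw [hprod, ← h12, Real.sqrt_mul_self (hpos 1), sub_zero]
  rw [hgg] at hg
  have hs : Real.sqrt (1 - 4 * (ω 1) ^ 2) = 1 - 2 * G := by linarith
  have ha : 0 ≤ 1 - 4 * (ω 1) ^ 2 := by
    by_contra hlt
    push_neg at hlt
    rw [Real.sqrt_eq_zero'.mpr hlt.le] at hs
    linarith
  have hsq : 1 - 4 * (ω 1) ^ 2 = (1 - 2 * G) ^ 2 := by
    have := Real.sq_sqrt ha
    rw [hs] at this
    linarith
  have hx2 : x ^ 2 = 1 - (1 - 2 * G) ^ 2 := by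
    rw [hx]
    exact Real.sq_sqrt (by nlinarith [sq_nonneg (ω 1)])
  have hxnn : 0 ≤ x := hx ▸ Real.sqrt_nonneg _
  have h2w1 : 2 * ω 1 = x := by
    nlinarith [hpos 1, sq_nonneg (2 * ω 1 - x), sq_nonneg (2 * ω 1 + x)]
  have hq : QFI ω = 16 * (x - x ^ 2) := by
    rcases hzero with h | h
    · have hw0 : ω 0 = 1 - x := by
        rw [h] at hsum; rw [← h12] at hsum; linarith
      unfold QFI; rw [h, hw0]; ring
    · have hw3 : ω 3 = 1 - x := by
        rw [h] at hsum; rw [← h12] at hsum; linarith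
      unfold QFI; rw [h, hw3]; ring
  refine ⟨hq, ?_, ?_⟩
  · rw [hq, ← hx, ← hx2]
  · rw [hq]
    nlinarith [sq_nonneg (4 * x - 1)]
end

section
/- Fix G ∈ (0, 1/2) and set x := √(1 − (1 − 2G)²). If ω lies in the probability simplex with ω₁ = 0 (or symmetrically ω₂ = 0), ω₀ = ω₃, and g(ω) = G, then Q(ω) = 16x = 16√(1 − (1 − 2G)²), and this value is strictly less than the interior optimum 8(1 + x). Hence no such boundary state attains the entanglement-constrained maximum of the quantum Fisher information. -/
/-- For `G ∈ (0, 1/2)` and `x = √(1 − (1 − 2G)²)`, any simplex point with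
`ω₁ = 0` (or symmetrically `ω₂ = 0`), `ω₀ = ω₃`, and GGM `G` has `Q(ω) = 16x`, strictly
less than the interior optimum `8(1 + x)`. -/
theorem boundary_w1_zero_suboptimal (G x : ℝ) (hG : G ∈ Set.Ioo (0 : ℝ) (1 / 2))
    (hx : x = Real.sqrt (1 - (1 - 2 * G) ^ 2)) (ω : Fin 4 → ℝ) (hpos : ∀ p, 0 ≤ ω p)
    (hsum : (∑ p, ω p) = 1) (hzero : ω 1 = 0 ∨ ω 2 = 0) (h03 : ω 0 = ω 3)
    (hg : GGM ω = G) :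
    QFI ω = 16 * x ∧
    QFI ω = 16 * Real.sqrt (1 - (1 - 2 * G) ^ 2) ∧
    QFI ω < 8 * (1 + x) := by
  obtain ⟨hG0, hG2⟩ := hG
  set a := ω 0 with ha
  have ha0 : 0 ≤ a := hpos 0
  have h12 : ω 1 * ω 2 = 0 := by rcases hzero with h | h <;> simp [h]
  have hsa : Real.sqrt (ω 0 * ω 3) = a := by
    rw [← h03, ← ha, Real.sqrt_mul_self ha0]
  have hsum4 : ω 0 + ω 1 + ω 2 + ω 3 = 1 := by
    simpa [Fin.sum_univ_four] using hsum
  have h2a : 2 * a ≤ 1 := by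
    have h1 := hpos 1; have h2 := hpos 2
    nlinarith [h03]
  have hGGM : (1 - Real.sqrt (1 - 4 * a ^ 2)) / 2 = G := by
    have : GGM ω = (1 - Real.sqrt (1 - 4 * a ^ 2)) / 2 := by
      unfold GGM; rw [h12, hsa, Real.sqrt_zero]; ring_nf
    linarith [hg, this.symm.trans hg]
  have hs : Real.sqrt (1 - 4 * a ^ 2) = 1 - 2 * G := by linarith
  have harg : 0 ≤ 1 - 4 * a ^ 2 := by nlinarith
  have hsq : 1 - 4 * a ^ 2 = (1 - 2 * G) ^ 2 := by
    rw [← hs, Real.sq_sqrt harg]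
  have hxa : x = 2 * a := by
    rw [hx]
    have : 1 - (1 - 2 * G) ^ 2 = (2 * a) ^ 2 := by nlinarith
    rw [this, Real.sqrt_sq (by linarith)]
  have hQ : QFI ω = 16 * x := by
    unfold QFI; rw [← h03, ← ha, hxa]; ring
  have hx1 : x < 1 := by
    rw [hx]
    have : 1 - (1 - 2 * G) ^ 2 < 1 := by nlinarith
    calc Real.sqrt (1 - (1 - 2 * G) ^ 2) < Real.sqrt 1 :=
          Real.sqrt_lt_sqrt (by nlinarith) this
      _ = 1 := Real.sqrt_one
  refine ⟨hQ, by rw [hQ, hx], ?_⟩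
  rw [hQ]; linarith
end

section
/- Fix G ∈ (0, 1/2) and set x := √(1 − (1 − 2G)²). If ω lies in the probability simplex with ω₁ = ω₂ = 0 and g(ω) = G, then Q(ω) = 16x² = 16(1 − (1 − 2G)²) = 64G(1 − G), and this value is strictly less than the interior optimum 8(1 + x). Hence no such boundary state attains the entanglement-constrained maximum of the quantum Fisher information. -/
/-- For `G ∈ (0, 1/2)` and `x = √(1 − (1 − 2G)²)`, any simplex point with
`ω₁ = ω₂ = 0` and GGM `G` has `Q(ω) = 16x² = 16(1 − (1 − 2G)²) = 64G(1 − G)`, strictly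
less than the interior optimum `8(1 + x)`. -/
theorem boundary_w1_w2_zero_suboptimal (G x : ℝ) (hG : G ∈ Set.Ioo (0 : ℝ) (1 / 2))
    (hx : x = Real.sqrt (1 - (1 - 2 * G) ^ 2)) (ω : Fin 4 → ℝ) (hpos : ∀ p, 0 ≤ ω p)
    (hsum : (∑ p, ω p) = 1) (h1 : ω 1 = 0) (h2 : ω 2 = 0) (hg : GGM ω = G) :
    QFI ω = 16 * x ^ 2 ∧
    QFI ω = 16 * (1 - (1 - 2 * G) ^ 2) ∧
    QFI ω = 64 * G * (1 - G) ∧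
    QFI ω < 8 * (1 + x) := by
  obtain ⟨hG0, hG2⟩ := hG
  have h0 := hpos 0
  have h3 := hpos 3
  have hab : ω 0 + ω 3 = 1 := by
    simpa [Fin.sum_univ_four, h1, h2] using hsum
  -- simplify GGM
  have hgg : Real.sqrt (1 - 4 * (ω 0 * ω 3)) = 1 - 2 * G := by
    have : (Real.sqrt (ω 1 * ω 2) - Real.sqrt (ω 0 * ω 3)) ^ 2 = ω 0 * ω 3 := by
      rw [h1]
      simp [Real.sq_sqrt (mul_nonneg h0 h3)]
    unfold GGM at hg
    rw [this] at hg
    linarith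
  have hnn : (0:ℝ) ≤ 1 - 4 * (ω 0 * ω 3) := by nlinarith [sq_nonneg (ω 0 - ω 3)]
  have hsq : 1 - 4 * (ω 0 * ω 3) = (1 - 2 * G) ^ 2 := by
    rw [← hgg, Real.sq_sqrt hnn]
  have hxnn : (0:ℝ) ≤ 1 - (1 - 2 * G) ^ 2 := by nlinarith
  have hx2 : x ^ 2 = 1 - (1 - 2 * G) ^ 2 := by
    rw [hx, Real.sq_sqrt hxnn]
  have hx0 : 0 ≤ x := hx ▸ Real.sqrt_nonneg _
  have hx1 : x < 1 := by
    nlinarith [hx2]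
  have hQ : QFI ω = 16 * (1 - (1 - 2 * G) ^ 2) := by
    unfold QFI
    nlinarith [hsq, hab]
  refine ⟨by rw [hQ, hx2], hQ, by rw [hQ]; ring, ?_⟩
  rw [hQ, ← hx2]
  nlinarith
end

section
/- If ω lies in the probability simplex with ω₁ = 0 and ω₃ = 1/2 − ω₀ (equivalently ω₂ = 1/2), then Q(ω) = 8 − 4(1 − 4ω₀)² ≤ 8; consequently, if g(ω) = G with G ∈ (0, 1/2), then Q(ω) is strictly less than the interior optimum 8(1 + √(1 − (1 − 2G)²)). -/
/-- If `ω` lies in the simplex with `ω₁ = 0` and `ω₃ = 1/2 − ω₀`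
(equivalently `ω₂ = 1/2`), then `Q(ω) = 8 − 4(1 − 4ω₀)² ≤ 8`; hence if `g(ω) = G` with
`G ∈ (0, 1/2)`, then `Q(ω)` is strictly below the interior optimum
`8(1 + √(1 − (1 − 2G)²))`. -/
theorem boundary_w1_zero_w3_half_minus_w0 (ω : Fin 4 → ℝ) (hpos : ∀ p, 0 ≤ ω p)
    (hsum : (∑ p, ω p) = 1) (h1 : ω 1 = 0) (h3 : ω 3 = 1 / 2 - ω 0) :
    QFI ω = 8 - 4 * (1 - 4 * ω 0) ^ 2 ∧ QFI ω ≤ 8 ∧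
      ∀ G ∈ Set.Ioo (0 : ℝ) (1 / 2), GGM ω = G →
        QFI ω < 8 * (1 + Real.sqrt (1 - (1 - 2 * G) ^ 2)) := by
  have hQ : QFI ω = 8 - 4 * (1 - 4 * ω 0) ^ 2 := by
    unfold QFI; rw [h3]; ring
  refine ⟨hQ, by nlinarith [sq_nonneg (1 - 4 * ω 0)], ?_⟩
  intro G hG _
  have hpos' : 0 < 1 - (1 - 2 * G) ^ 2 := by nlinarith [hG.1, hG.2]
  have hs : 0 < Real.sqrt (1 - (1 - 2 * G) ^ 2) := Real.sqrt_pos.mpr hpos'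
  nlinarith [sq_nonneg (1 - 4 * ω 0)]
end

section
/- Fix G ∈ (0, 1/2). Suppose ω lies in the open simplex (ω_p > 0 for all p, ω₀+ω₁+ω₂+ω₃ = 1), satisfies g(ω) = G, and is a local maximum of Q on the constraint set {ω' : ω'_p > 0, Σ ω'_p = 1, g(ω') = G}. Then ω₁ = ω₂ and (√ω₃ − √ω₀)(1 − 2(√ω₃ + √ω₀)²) = 0; in particular, if additionally G ≠ (1 − √(3)/2)/2, then ω₀ = ω₃. -/
open Filter Set

private lemma ev_pos' {f : ℝ → ℝ} (hf : Continuous f) (h0 : 0 < f 0) :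
    ∀ᶠ ε in nhds (0:ℝ), 0 < f ε :=
  hf.continuousAt.eventually_mem (isOpen_Ioi.mem_nhds (by simpa using h0))

private lemma curve_contra' {S : Set (Fin 4 → ℝ)} {ω : Fin 4 → ℝ}
    (hmax : IsLocalMaxOn QFI S ω) (c : ℝ → Fin 4 → ℝ)
    (hc : Filter.Tendsto c (nhdsWithin 0 (Set.Ioi 0)) (nhds ω))
    (hmem : ∀ᶠ ε in nhdsWithin (0:ℝ) (Set.Ioi 0), c ε ∈ S ∧ QFI ω < QFI (c ε)) :
    False := by
  have ht : Filter.Tendsto c (nhdsWithin 0 (Set.Ioi 0)) (nhdsWithin ω S) := by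
    rw [tendsto_nhdsWithin_iff]
    exact ⟨hc, hmem.mono fun ε h => h.1⟩
  have hmax' : ∀ᶠ x in nhdsWithin ω S, QFI x ≤ QFI ω := hmax
  rcases ((ht.eventually hmax').and hmem).exists with ⟨ε, h1, _, h3⟩
  exact absurd h1 (not_le.2 h3)

set_option maxHeartbeats 1000000 in
/-- For `G ∈ (0, 1/2)`, any interior point of the simplex with `g(ω) = G`
which is a local maximum of `Q` on the constraint set
`{ω' : ω'_p > 0, Σω' = 1, g(ω') = G}` satisfies `ω₁ = ω₂` and
`(√ω₃ − √ω₀)(1 − 2(√ω₃ + √ω₀)²) = 0`; in particular if `G ≠ (1 − √3/2)/2` then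
`ω₀ = ω₃`. -/
theorem interior_critical_point_structure (G : ℝ) (hG : G ∈ Set.Ioo (0 : ℝ) (1 / 2))
    (ω : Fin 4 → ℝ) (hpos : ∀ p, 0 < ω p) (hsum : (∑ p, ω p) = 1) (hg : GGM ω = G)
    (hmax : IsLocalMaxOn QFI
      {ω' : Fin 4 → ℝ | (∀ p, 0 < ω' p) ∧ (∑ p, ω' p) = 1 ∧ GGM ω' = G} ω) :
    ω 1 = ω 2 ∧
    (Real.sqrt (ω 3) - Real.sqrt (ω 0)) *
      (1 - 2 * (Real.sqrt (ω 3) + Real.sqrt (ω 0)) ^ 2) = 0 ∧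
    (G ≠ (1 - Real.sqrt 3 / 2) / 2 → ω 0 = ω 3) := by
  have h0 := hpos 0; have h1 := hpos 1; have h2 := hpos 2; have h3 := hpos 3
  rw [Fin.sum_univ_four] at hsum
  -- ====================  Part 1 : ω 1 = ω 2  ====================
  have h12 : ω 1 = ω 2 := by
    by_contra hne
    set t : ℝ := Real.sqrt (ω 1 * ω 2) - Real.sqrt (ω 0 * ω 3) with ht
    set σ : ℝ := if ω 2 ≤ ω 1 then 1 else -1 with hσdef
    have hσ : σ = 1 ∨ σ = -1 := by by_cases h : ω 2 ≤ ω 1 <;> simp [hσdef, h]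
    set u : ℝ → ℝ := fun ε => t + Real.sqrt ((ω 0 + ε) * (ω 3 + ε)) with hudef
    set D : ℝ → ℝ := fun ε => (ω 1 + ω 2 - 2*ε)^2 - 4 * (u ε)^2 with hDdef
    set c : ℝ → Fin 4 → ℝ := fun ε =>
      ![ω 0 + ε, (ω 1 + ω 2 - 2*ε + σ * Real.sqrt (D ε))/2,
        (ω 1 + ω 2 - 2*ε - σ * Real.sqrt (D ε))/2, ω 3 + ε] with hcdef
    have hu0 : u 0 = Real.sqrt (ω 1 * ω 2) := by
      show t + Real.sqrt ((ω 0 + 0) * (ω 3 + 0)) = _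
      rw [ht]; norm_num
    have hu0pos : 0 < u 0 := by rw [hu0]; exact Real.sqrt_pos.2 (mul_pos h1 h2)
    have hu0sq : (u 0)^2 = ω 1 * ω 2 := by
      rw [hu0]; exact Real.sq_sqrt (mul_pos h1 h2).le
    have hD0 : D 0 = (ω 1 - ω 2)^2 := by
      show (ω 1 + ω 2 - 2*0)^2 - 4 * (u 0)^2 = _
      rw [hu0sq]; ring
    have hD0pos : 0 < D 0 := by
      rw [hD0]
      exact lt_of_le_of_ne (sq_nonneg _) (Ne.symm (pow_ne_zero 2 (sub_ne_zero.2 hne)))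
    have hcu : Continuous u := by rw [hudef]; fun_prop
    have hcD : Continuous D := by rw [hDdef, hudef]; fun_prop
    have hcc : Continuous c := by
      rw [hcdef, hDdef, hudef]
      apply continuous_pi; intro p
      fin_cases p <;> simp <;> fun_prop
    have hσD : σ * Real.sqrt (D 0) = ω 1 - ω 2 := by
      have hsD0 : Real.sqrt (D 0) = |ω 1 - ω 2| := by rw [hD0, Real.sqrt_sq_eq_abs]
      by_cases hcase : ω 2 ≤ ω 1
      · rw [hσdef, if_pos hcase, hsD0, abs_of_nonneg (by linarith)]; ring
      · rw [hσdef, if_neg hcase, hsD0, abs_of_neg (by linarith)]; ring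
    have hc0 : c 0 = ω := by
      funext p
      fin_cases p
      · show ω 0 + 0 = ω 0; ring
      · show (ω 1 + ω 2 - 2*0 + σ * Real.sqrt (D 0))/2 = ω 1; linarith [hσD]
      · show (ω 1 + ω 2 - 2*0 - σ * Real.sqrt (D 0))/2 = ω 2; linarith [hσD]
      · show ω 3 + 0 = ω 3; ring
    have htend : Filter.Tendsto c (nhdsWithin 0 (Set.Ioi 0)) (nhds ω) := by
      have := hcc.continuousAt (x := 0)
      rw [ContinuousAt, hc0] at this
      exact this.mono_left nhdsWithin_le_nhds
    refine curve_contra' hmax c htend ?_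
    have hev1 : ∀ᶠ ε in nhds (0:ℝ), 0 < u ε := ev_pos' hcu hu0pos
    have hev2 : ∀ᶠ ε in nhds (0:ℝ), 0 < D ε := ev_pos' hcD hD0pos
    have hev3 : ∀ᶠ ε in nhds (0:ℝ), 0 < ω 1 + ω 2 - 2*ε :=
      ev_pos' (by fun_prop) (by linarith)
    filter_upwards [(hev1.and (hev2.and hev3)).filter_mono nhdsWithin_le_nhds,
      self_mem_nhdsWithin] with ε hcond hεmem
    obtain ⟨hue, hDe, hse⟩ := hcond
    have hεpos : 0 < ε := hεmem
    have hSDnn : 0 ≤ Real.sqrt (D ε) := Real.sqrt_nonneg _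
    have hDval : D ε = (ω 1 + ω 2 - 2*ε)^2 - 4 * (u ε)^2 := rfl
    have huval : u ε = t + Real.sqrt ((ω 0 + ε) * (ω 3 + ε)) := rfl
    have hSDlt : Real.sqrt (D ε) < ω 1 + ω 2 - 2*ε := by
      rw [Real.sqrt_lt' hse, hDval]
      nlinarith [hue]
    have hσsq : σ^2 = 1 := by rcases hσ with h | h <;> rw [h] <;> norm_num
    have hSDsq : (Real.sqrt (D ε))^2 = D ε := Real.sq_sqrt hDe.le
    have hE1pos : 0 < (ω 1 + ω 2 - 2*ε + σ * Real.sqrt (D ε))/2 := by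
      rcases hσ with h | h <;> rw [h] <;> linarith
    have hE2pos : 0 < (ω 1 + ω 2 - 2*ε - σ * Real.sqrt (D ε))/2 := by
      rcases hσ with h | h <;> rw [h] <;> linarith
    have hc0' : c ε 0 = ω 0 + ε := rfl
    have hc1' : c ε 1 = (ω 1 + ω 2 - 2*ε + σ * Real.sqrt (D ε))/2 := rfl
    have hc2' : c ε 2 = (ω 1 + ω 2 - 2*ε - σ * Real.sqrt (D ε))/2 := rfl
    have hc3' : c ε 3 = ω 3 + ε := rfl
    have hprod : c ε 1 * c ε 2 = (u ε)^2 := by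
      rw [hc1', hc2']
      calc (ω 1 + ω 2 - 2*ε + σ * Real.sqrt (D ε))/2 *
            ((ω 1 + ω 2 - 2*ε - σ * Real.sqrt (D ε))/2)
          = ((ω 1 + ω 2 - 2*ε)^2 - σ^2 * (Real.sqrt (D ε))^2)/4 := by ring
        _ = (u ε)^2 := by rw [hσsq, hSDsq, hDval]; ring
    have hkey : Real.sqrt (c ε 1 * c ε 2) - Real.sqrt (c ε 0 * c ε 3) = t := by
      rw [hprod, Real.sqrt_sq hue.le, hc0', hc3', huval]; ring
    refine ⟨⟨?_, ?_, ?_⟩, ?_⟩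
    · intro p
      fin_cases p
      · show 0 < c ε 0; rw [hc0']; linarith
      · show 0 < c ε 1; rw [hc1']; linarith
      · show 0 < c ε 2; rw [hc2']; linarith
      · show 0 < c ε 3; rw [hc3']; linarith
    · rw [Fin.sum_univ_four, hc0', hc1', hc2', hc3']; linarith
    · calc GGM (c ε) = (1 - Real.sqrt (1 - 4 * t^2))/2 := by unfold GGM; rw [hkey]
        _ = GGM ω := by unfold GGM; rw [ht]
        _ = G := hg
    · unfold QFI
      rw [hc0', hc3', show ω 3 + ε - (ω 0 + ε) = ω 3 - ω 0 by ring]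
      linarith
  -- ====================  Part 2 : stationarity  ====================
  have hx2 : Real.sqrt (ω 0) ^ 2 = ω 0 := Real.sq_sqrt (hpos 0).le
  have hy2 : Real.sqrt (ω 3) ^ 2 = ω 3 := Real.sq_sqrt (hpos 3).le
  have hxpos : 0 < Real.sqrt (ω 0) := Real.sqrt_pos.2 (hpos 0)
  have hypos : 0 < Real.sqrt (ω 3) := Real.sqrt_pos.2 (hpos 3)
  set x := Real.sqrt (ω 0) with hxdef
  set y := Real.sqrt (ω 3) with hydef
  have hmval : ω 1 = (1 - x^2 - y^2)/2 := by rw [hx2, hy2]; linarith [h12]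
  have hK : (y - x) * (1 - 2*(y + x)^2) = 0 := by
    by_contra hKne
    set d : ℝ := if 0 < (y - x) * (1 - 2*(y + x)^2) then 1 else -1 with hddef
    have hd : d = 1 ∨ d = -1 := by
      by_cases h : 0 < (y - x) * (1 - 2*(y + x)^2) <;> simp [hddef, h]
    have hdK : 0 < d * ((y - x) * (1 - 2*(y + x)^2)) := by
      by_cases h : 0 < (y - x) * (1 - 2*(y + x)^2)
      · rw [hddef, if_pos h]; linarith
      · rw [hddef, if_neg h]
        have : (y - x) * (1 - 2*(y + x)^2) < 0 := lt_of_le_of_ne (not_lt.1 h) hKne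
        linarith
    set c : ℝ → Fin 4 → ℝ := fun ε =>
      ![(x - d*ε/2)^2, (1 - (x - d*ε/2)^2 - (y + d*ε/2)^2)/2,
        (1 - (x - d*ε/2)^2 - (y + d*ε/2)^2)/2, (y + d*ε/2)^2] with hcdef
    have hcc : Continuous c := by
      rw [hcdef]
      apply continuous_pi; intro p
      fin_cases p <;> simp <;> fun_prop
    have hc0 : c 0 = ω := by
      funext p
      fin_cases p
      · show (x - d*0/2)^2 = ω 0; rw [← hx2]; ring
      · show (1 - (x - d*0/2)^2 - (y + d*0/2)^2)/2 = ω 1; rw [hmval]; ring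
      · show (1 - (x - d*0/2)^2 - (y + d*0/2)^2)/2 = ω 2; rw [← h12, hmval]; ring
      · show (y + d*0/2)^2 = ω 3; rw [← hy2]; ring
    have htend : Filter.Tendsto c (nhdsWithin 0 (Set.Ioi 0)) (nhds ω) := by
      have := hcc.continuousAt (x := 0)
      rw [ContinuousAt, hc0] at this
      exact this.mono_left nhdsWithin_le_nhds
    refine curve_contra' hmax c htend ?_
    have hevx : ∀ᶠ ε in nhds (0:ℝ), 0 < x - d*ε/2 :=
      ev_pos' (by fun_prop) (by linarith)
    have hevy : ∀ᶠ ε in nhds (0:ℝ), 0 < y + d*ε/2 :=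
      ev_pos' (by fun_prop) (by linarith)
    have hevm : ∀ᶠ ε in nhds (0:ℝ), 0 < (1 - (x - d*ε/2)^2 - (y + d*ε/2)^2)/2 :=
      ev_pos' (by fun_prop) (by nlinarith [hmval, h1])
    have hevL : ∀ᶠ ε in nhds (0:ℝ),
        0 < 16*d*((y - x) * (1 - 2*(y + x)^2)) + 8*(1 - 2*(y + x)^2)*ε :=
      ev_pos' (by fun_prop) (by nlinarith [hdK])
    filter_upwards [(hevx.and (hevy.and (hevm.and hevL))).filter_mono nhdsWithin_le_nhds,
      self_mem_nhdsWithin] with ε hcond hεmem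
    obtain ⟨hxe, hye, hme, hLe⟩ := hcond
    have hεpos : 0 < ε := hεmem
    have hc0' : c ε 0 = (x - d*ε/2)^2 := rfl
    have hc1' : c ε 1 = (1 - (x - d*ε/2)^2 - (y + d*ε/2)^2)/2 := rfl
    have hc2' : c ε 2 = (1 - (x - d*ε/2)^2 - (y + d*ε/2)^2)/2 := rfl
    have hc3' : c ε 3 = (y + d*ε/2)^2 := rfl
    have hkey : Real.sqrt (c ε 1 * c ε 2) - Real.sqrt (c ε 0 * c ε 3)
        = Real.sqrt (ω 1 * ω 2) - Real.sqrt (ω 0 * ω 3) := by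
      rw [hc0', hc1', hc2', hc3', Real.sqrt_mul_self hme.le,
        ← mul_pow, Real.sqrt_sq (mul_pos hxe hye).le,
        ← h12, Real.sqrt_mul_self h1.le,
        ← hx2, ← hy2, ← mul_pow, Real.sqrt_sq (mul_pos hxpos hypos).le, hmval]
      ring
    refine ⟨⟨?_, ?_, ?_⟩, ?_⟩
    · intro p
      fin_cases p
      · show 0 < c ε 0; rw [hc0']; exact pow_pos hxe 2
      · show 0 < c ε 1; rw [hc1']; linarith
      · show 0 < c ε 2; rw [hc2']; linarith
      · show 0 < c ε 3; rw [hc3']; exact pow_pos hye 2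
    · rw [Fin.sum_univ_four, hc0', hc1', hc2', hc3']; ring
    · unfold GGM
      rw [hkey]
      exact hg
    · unfold QFI
      rw [hc0', hc3', ← hx2, ← hy2]
      rcases hd with h | h <;> rw [h] at hLe ⊢ <;>
        nlinarith [mul_pos hεpos hLe]
  -- ====================  Part 3  ====================
  refine ⟨h12, hK, ?_⟩
  intro hGne
  rcases mul_eq_zero.1 hK with h | h
  · have hxy : x = y := by linarith [sub_eq_zero.1 h]
    rw [← hx2, ← hy2, hxy]
  · exfalso
    apply hGne
    have hsq : (y + x)^2 = 1/2 := by linarith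
    have h14 : Real.sqrt (ω 1 * ω 2) - Real.sqrt (ω 0 * ω 3) = 1/4 := by
      rw [← h12, Real.sqrt_mul_self h1.le, ← hx2, ← hy2, ← mul_pow,
        Real.sqrt_sq (mul_pos hxpos hypos).le, hmval]
      nlinarith [hsq]
    have hroot : Real.sqrt (3/4 : ℝ) = Real.sqrt 3 / 2 := by
      rw [show (3:ℝ)/4 = (Real.sqrt 3 / 2)^2 by
        rw [div_pow, Real.sq_sqrt (by norm_num : (0:ℝ) ≤ 3)]; norm_num]
      exact Real.sqrt_sq (by positivity)
    rw [← hg]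
    unfold GGM
    rw [h14]
    norm_num [hroot]
end
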